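/- For all r ∈ [1, R], U(r) ≤ L₂ + L₃(r). Consequently, the upper-bound expression U(r) in the regime 1 ≤ r ≤ R is dominated by the sum of the two lower-bound expressions L₂ and L₃(r). -/

import Mathlib

noncomputable section

theorem upper_bound_dominated_by_sum_of_lower_bounds
    (n f ε₁ R : ℝ)
    (hn : 1 ≤ n) (hf0 : 0 < f) (hf1 : f < 1) (hε₁ : 0 < ε₁)
    (hR : R = 1 + 8 / (n * f * ε₁ ^ 2)) :
    ∀ r : ℝ, 1 ≤ r → r ≤ R →
      (f * R + (1 - f) * r ^ 2) / (4 * n * (f + (1 - f) * r) ^ 2)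
        ≤ R / (4 * n * (f + (1 - f) * R))
          + f * (R - 1) / (4 * n * (f + (1 - f) * r) ^ 2) := by
  intro r hr1 hrR
  have hn0 : (0:ℝ) < n := lt_of_lt_of_le one_pos hn
  have hR1 : (1:ℝ) ≤ R := by
    rw [hR]
    have : 0 < 8 / (n * f * ε₁ ^ 2) := by positivity
    linarith
  have hDr : 0 < f + (1 - f) * r := by nlinarith
  have hDR : 0 < f + (1 - f) * R := by nlinarith
  have key : (f + (1 - f) * r ^ 2) * (f + (1 - f) * R) ≤ R * (f + (1 - f) * r) ^ 2 := by
    nlinarith [mul_nonneg (mul_nonneg hf0.le (sub_nonneg.2 hr1)) hDR.le,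
      mul_nonneg (mul_nonneg hf0.le (sub_nonneg.2 hrR)) hDr.le,
      mul_pos hDr hDR]
  have goal' : (f + (1 - f) * r ^ 2) / (4 * n * (f + (1 - f) * r) ^ 2)
      ≤ R / (4 * n * (f + (1 - f) * R)) := by
    rw [div_le_div_iff₀ (by positivity) (by positivity)]
    nlinarith [mul_le_mul_of_nonneg_left key (by positivity : (0:ℝ) ≤ 4 * n)]
  have split : (f * R + (1 - f) * r ^ 2) / (4 * n * (f + (1 - f) * r) ^ 2)
      = (f + (1 - f) * r ^ 2) / (4 * n * (f + (1 - f) * r) ^ 2)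
        + f * (R - 1) / (4 * n * (f + (1 - f) * r) ^ 2) := by ring
  rw [split]
  exact add_le_add_left goal' _
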